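/- Let Ω be a family of pairs of supports and let IC(Ω) be the set of pairs (X,Y) ∈ Σ_Ω with colsupp(X) = colsupp(Y). The map φ(X,Y) = (X_i Y_iᵀ)_{i=1}^r restricted to IC(Ω) is injective up to equivalences: if (X,Y), (X',Y') ∈ IC(Ω) and φ(X,Y) equals φ(X',Y') up to a permutation of indices, then (X,Y) ∼ (X',Y'), i.e., there exists a generalized permutation matrix G with X' = XG and Y' = Y(G⁻¹)ᵀ. -/

import Mathlib

open Matrix

def IsGenPerm {r : ℕ} (G : Matrix (Fin r) (Fin r) ℂ) : Prop :=
  ∃ (σ : Equiv.Perm (Fin r)) (d : Fin r → ℂ),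
    (∀ i, d i ≠ 0) ∧ ∀ i j, G i j = if i = σ j then d i else 0

def PSEquiv {m n r : ℕ}
    (p q : Matrix (Fin m) (Fin r) ℂ × Matrix (Fin n) (Fin r) ℂ) : Prop :=
  ∃ G, IsGenPerm G ∧ q.1 = p.1 * G ∧ q.2 = p.2 * (G⁻¹)ᵀ

def PSUniqueSet {m n r : ℕ}
    (Sig : Set (Matrix (Fin m) (Fin r) ℂ × Matrix (Fin n) (Fin r) ℂ)) :
    Set (Matrix (Fin m) (Fin r) ℂ × Matrix (Fin n) (Fin r) ℂ) :=
  {p | p ∈ Sig ∧ ∀ q ∈ Sig, q.1 * q.2ᵀ = p.1 * p.2ᵀ → PSEquiv p q}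

/-- The support of a matrix is contained in the (binary) support `S`. -/
def SuppSub {a b : ℕ} (X : Matrix (Fin a) (Fin b) ℂ) (S : Set (Fin a × Fin b)) : Prop :=
  ∀ i j, X i j ≠ 0 → (i, j) ∈ S

/-- The column support of a matrix: indices of its nonzero columns. -/
def Colsupp {a b : ℕ} (X : Matrix (Fin a) (Fin b) ℂ) : Set (Fin b) :=
  {j | ∃ i, X i j ≠ 0}

/-- The column support of a support (set of index pairs). -/
def ColsuppS {a b : ℕ} (S : Set (Fin a × Fin b)) : Set (Fin b) :=
  {j | ∃ i, (i, j) ∈ S}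

/-- The constraint set Σ_Ω associated with a family of pairs of supports. -/
def SigmaOm {m n r : ℕ} (Om : Set (Set (Fin m × Fin r) × Set (Fin n × Fin r))) :
    Set (Matrix (Fin m) (Fin r) ℂ × Matrix (Fin n) (Fin r) ℂ) :=
  {p | ∃ S ∈ Om, SuppSub p.1 S.1 ∧ SuppSub p.2 S.2}

def phiTuple {m n r : ℕ} (X : Matrix (Fin m) (Fin r) ℂ)
    (Y : Matrix (Fin n) (Fin r) ℂ) : Fin r → Matrix (Fin m) (Fin n) ℂ :=
  fun i => vecMulVec (fun k => X k i) (fun l => Y l i)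

theorem stmt11 {m n r : ℕ} (Om : Set (Set (Fin m × Fin r) × Set (Fin n × Fin r)))
    (X X' : Matrix (Fin m) (Fin r) ℂ) (Y Y' : Matrix (Fin n) (Fin r) ℂ)
    (hXY : (X, Y) ∈ SigmaOm Om) (hcs : Colsupp X = Colsupp Y)
    (hXY' : (X', Y') ∈ SigmaOm Om) (hcs' : Colsupp X' = Colsupp Y')
    (hperm : ∃ σ : Equiv.Perm (Fin r), ∀ i, phiTuple X' Y' i = phiTuple X Y (σ i)) :
    PSEquiv (X, Y) (X', Y') := by
  classical
  obtain ⟨σ, hσ⟩ := hperm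
  -- key scalar claim
  have key : ∀ i : Fin r, ∃ c : ℂ, c ≠ 0 ∧ (∀ k, X' k i = c * X k (σ i)) ∧
      (∀ l, Y' l i = c⁻¹ * Y l (σ i)) := by
    intro i
    have hprod : ∀ k l, X' k i * Y' l i = X k (σ i) * Y l (σ i) := by
      intro k l
      have := congrFun (congrFun (hσ i) k) l
      simpa [phiTuple, vecMulVec] using this
    by_cases hz : ∀ k, X k (σ i) = 0
    · -- column σ i of X (hence Y) is zero
      have hzY : ∀ l, Y l (σ i) = 0 := by
        intro l
        by_contra hl
        have : (σ i) ∈ Colsupp Y := ⟨l, hl⟩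
        rw [← hcs] at this
        obtain ⟨k, hk⟩ := this
        exact hk (hz k)
      have hX' : ∀ k, X' k i = 0 := by
        intro k
        by_contra hk
        have hY' : ∀ l, Y' l i = 0 := by
          intro l
          have h := hprod k l
          rw [hz k, zero_mul] at h
          rcases mul_eq_zero.mp h with h1 | h2
          · exact absurd h1 hk
          · exact h2
        have : i ∈ Colsupp Y' := by rw [← hcs']; exact ⟨k, hk⟩
        obtain ⟨l, hl⟩ := this
        exact hl (hY' l)
      have hY' : ∀ l, Y' l i = 0 := by
        intro l
        by_contra hl
        have : i ∈ Colsupp X' := by rw [hcs']; exact ⟨l, hl⟩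
        obtain ⟨k, hk⟩ := this
        exact hk (hX' k)
      refine ⟨1, one_ne_zero, ?_, ?_⟩
      · intro k; rw [hX' k, hz k, mul_zero]
      · intro l; rw [hY' l, hzY l, inv_one, one_mul]
    · push_neg at hz
      obtain ⟨k0, hk0⟩ := hz
      have : (σ i) ∈ Colsupp Y := by rw [← hcs]; exact ⟨k0, hk0⟩
      obtain ⟨l0, hl0⟩ := this
      have hY'0 : Y' l0 i ≠ 0 := by
        intro h
        have h2 := hprod k0 l0
        rw [h, mul_zero] at h2
        exact (mul_ne_zero hk0 hl0) h2.symm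
      refine ⟨Y l0 (σ i) / Y' l0 i, div_ne_zero hl0 hY'0, ?_, ?_⟩
      · intro k
        have h := hprod k l0
        field_simp
        linear_combination h
      · intro l
        have hX'0 : X' k0 i ≠ 0 := by
          intro h
          have h2 := hprod k0 l0
          rw [h, zero_mul] at h2
          exact (mul_ne_zero hk0 hl0) h2.symm
        have h := hprod k0 l
        have h0 := hprod k0 l0
        have hgoal : X' k0 i * (Y' l i * Y l0 (σ i))
            = X' k0 i * (Y l (σ i) * Y' l0 i) := by
          linear_combination Y l0 (σ i) * h - Y l (σ i) * h0
        have hcan := mul_left_cancel₀ hX'0 hgoal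
        field_simp
        linear_combination hcan
  choose c hc0 hcX hcY using key
  set d : Fin r → ℂ := fun j => c (σ.symm j) with hd
  have hd0 : ∀ j, d j ≠ 0 := fun j => hc0 _
  set G : Matrix (Fin r) (Fin r) ℂ := fun i j => if i = σ j then d i else 0 with hG
  set H : Matrix (Fin r) (Fin r) ℂ := fun i j => if i = σ.symm j then (d j)⁻¹ else 0 with hH
  have hGH : G * H = 1 := by
    ext i j
    rw [Matrix.mul_apply, Finset.sum_eq_single (σ.symm j)]
    · simp only [hG, hH, Equiv.apply_symm_apply, if_true, Matrix.one_apply]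
      by_cases h : i = j
      · simp [h, mul_inv_cancel₀ (hd0 j)]
      · simp [h]
    · intro b _ hb; simp [hG, hH, hb]
    · intro h; exact absurd (Finset.mem_univ _) h
  have hHG : H * G = 1 := by
    ext i j
    rw [Matrix.mul_apply, Finset.sum_eq_single (σ j)]
    · simp only [hG, hH, Equiv.symm_apply_apply, if_true, Matrix.one_apply]
      by_cases h : i = j
      · simp [h, inv_mul_cancel₀ (hd0 (σ j))]
      · simp [h]
    · intro b _ hb; simp [hG, hH, hb]
    · intro h; exact absurd (Finset.mem_univ _) h
  have hGinv : G⁻¹ = H := Matrix.inv_eq_right_inv hGH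
  refine ⟨G, ⟨σ, d, hd0, fun i j => rfl⟩, ?_, ?_⟩
  · ext k i
    show X' k i = (X * G) k i
    rw [Matrix.mul_apply]
    simp only [Matrix.mul_apply, hG, mul_ite, mul_zero]
    rw [Finset.sum_ite_eq' Finset.univ (σ i) (fun j => X k j * d j)]
    simp only [Finset.mem_univ, if_true, hd, Equiv.symm_apply_apply]
    rw [hcX i k, mul_comm]
  · rw [hGinv]
    ext l i
    simp only [Matrix.mul_apply, Matrix.transpose_apply]
    simp only [Matrix.mul_apply, Matrix.transpose_apply, hH, mul_ite, mul_zero]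
    have : ∀ j : Fin r, (if i = σ.symm j then Y l j * (d j)⁻¹ else 0)
        = (if j = σ i then Y l j * (d j)⁻¹ else 0) := by
      intro j
      congr 1
      simp [Equiv.eq_symm_apply, eq_comm]
    rw [Finset.sum_congr rfl (fun j _ => this j),
      Finset.sum_ite_eq' Finset.univ (σ i) (fun j => Y l j * (d j)⁻¹)]
    simp only [Finset.mem_univ, if_true, hd, Equiv.symm_apply_apply]
    rw [hcY i l, mul_comm]
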